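/- arXiv:1706.05767 — 4 statements merged into one kernel-verified Lean document; each statement's English description precedes it below -/
import Mathlib

section
/- Distributivity of the Zykov product over the Zykov join: for finite simple graphs G on V, H on W, and K on U, the graph G · (H + K) is isomorphic to (G · H) + (G · K), via the canonical bijection between V × (W ⊕ U) and (V × W) ⊕ (V × U). -/
variable {V W U : Type*}

/-- The Zykov join of two simple graphs: vertices in the same summand are adjacent
iff they are adjacent in the corresponding graph; vertices in different summands
are always adjacent. -/
def zykovJoin (G : SimpleGraph V) (H : SimpleGraph W) : SimpleGraph (V ⊕ W) where
  Adj x y :=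
    match x, y with
    | Sum.inl a, Sum.inl b => G.Adj a b
    | Sum.inr a, Sum.inr b => H.Adj a b
    | Sum.inl _, Sum.inr _ => True
    | Sum.inr _, Sum.inl _ => True
  symm := by
    constructor
    rintro (a | a) (b | b) h
    · exact h.symm
    · trivial
    · trivial
    · exact h.symm
  loopless := by
    constructor
    rintro (a | a) h
    · exact G.loopless.irrefl a h
    · exact H.loopless.irrefl a h

/-- The disjoint union of two simple graphs: vertices are adjacent iff they lie in
the same summand and are adjacent there. -/
def disjUnion (G : SimpleGraph V) (H : SimpleGraph W) : SimpleGraph (V ⊕ W) where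
  Adj x y :=
    match x, y with
    | Sum.inl a, Sum.inl b => G.Adj a b
    | Sum.inr a, Sum.inr b => H.Adj a b
    | Sum.inl _, Sum.inr _ => False
    | Sum.inr _, Sum.inl _ => False
  symm := by
    constructor
    rintro (a | a) (b | b) h
    · exact h.symm
    · exact h.elim
    · exact h.elim
    · exact h.symm
  loopless := by
    constructor
    rintro (a | a) h
    · exact G.loopless.irrefl a h
    · exact H.loopless.irrefl a h

/-- The Zykov product: distinct vertices `(a,b)`, `(c,d)` are adjacent iff
`a ~ c` in `G` or `b ~ d` in `H`. -/
def zykovProd (G : SimpleGraph V) (H : SimpleGraph W) : SimpleGraph (V × W) where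
  Adj x y := x ≠ y ∧ (G.Adj x.1 y.1 ∨ H.Adj x.2 y.2)
  symm := by
    constructor
    rintro x y ⟨hxy, h⟩
    exact ⟨hxy.symm, h.imp SimpleGraph.Adj.symm SimpleGraph.Adj.symm⟩
  loopless := by constructor; rintro x ⟨hx, -⟩; exact hx rfl

/-- The strong product: `(a,b)` and `(c,d)` are adjacent iff (`a = c` and `b ~ d`) or
(`b = d` and `a ~ c`) or (`a ~ c` and `b ~ d`). -/
def strongProd (G : SimpleGraph V) (H : SimpleGraph W) : SimpleGraph (V × W) where
  Adj x y := (x.1 = y.1 ∧ H.Adj x.2 y.2) ∨ (x.2 = y.2 ∧ G.Adj x.1 y.1) ∨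
    (G.Adj x.1 y.1 ∧ H.Adj x.2 y.2)
  symm := by
    constructor
    rintro x y (⟨h1, h2⟩ | ⟨h1, h2⟩ | ⟨h1, h2⟩)
    · exact Or.inl ⟨h1.symm, h2.symm⟩
    · exact Or.inr (Or.inl ⟨h1.symm, h2.symm⟩)
    · exact Or.inr (Or.inr ⟨h1.symm, h2.symm⟩)
  loopless := by
    constructor
    rintro x (⟨-, h⟩ | ⟨-, h⟩ | ⟨h, -⟩) <;> exact h.ne rfl

/-- The number of `n`-cliques of a graph. -/
noncomputable def cliqueCount (G : SimpleGraph V) (n : ℕ) : ℕ :=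
  Set.ncard {s : Finset V | G.IsNClique n s}

/-- The Euler characteristic of a finite simple graph:
`χ(G) = Σ_{n=1}^{|V|} (-1)^(n+1) v_{n-1}(G)` where `v_{n-1}(G)` is the number of
`n`-cliques of `G`. -/
noncomputable def eulerChar (G : SimpleGraph V) [Fintype V] : ℤ :=
  ∑ n ∈ Finset.Icc 1 (Fintype.card V), (-1 : ℤ) ^ (n + 1) * cliqueCount G n

/-- Distributivity of the Zykov product over the Zykov join, via the
canonical bijection `V × (W ⊕ U) ≃ (V × W) ⊕ (V × U)`. -/
theorem zykovProd_zykovJoin_distrib [Fintype V] [Fintype W] [Fintype U]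
    (G : SimpleGraph V) (H : SimpleGraph W) (K : SimpleGraph U) :
    ∀ x y : V × (W ⊕ U),
      (zykovProd G (zykovJoin H K)).Adj x y ↔
      (zykovJoin (zykovProd G H) (zykovProd G K)).Adj
        (Equiv.prodSumDistrib V W U x) (Equiv.prodSumDistrib V W U y) := by
  rintro ⟨a, b | b⟩ ⟨c, d | d⟩ <;>
    simp [zykovProd, zykovJoin, Equiv.prodSumDistrib, Prod.ext_iff] <;> tauto
end

section
/- For finite simple graphs G and H, the reduced quantity i(G) = 1 − χ(G) is multiplicative under the Zykov join: 1 − χ(G + H) = (1 − χ(G)) · (1 − χ(H)). Equivalently, χ(G + H) = χ(G) + χ(H) − χ(G)·χ(H). -/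
variable {V W U : Type*}

open Finset Sum

lemma cliqueCount_zero (G : SimpleGraph V) : cliqueCount G 0 = 1 := by
  have h : {s : Finset V | G.IsNClique 0 s} = {∅} := by
    ext s
    constructor
    · intro hs
      simpa [Finset.card_eq_zero] using hs.2
    · rintro rfl
      exact ⟨by simp, by simp⟩
  rw [cliqueCount, h, Set.ncard_singleton]

open scoped Classical in
lemma one_sub_eulerChar (G : SimpleGraph V) [Fintype V] :
    1 - eulerChar G = ∑ s : Finset V, if G.IsClique ↑s then (-1 : ℤ) ^ s.card else 0 := by
  classical
  have hcount : ∀ n, (cliqueCount G n : ℤ) =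
      ((univ.filter (fun s : Finset V => G.IsNClique n s)).card : ℤ) := by
    intro n
    rw [cliqueCount, Set.ncard_eq_toFinset_card', Set.toFinset_setOf]
  have hsum : (∑ s : Finset V, if G.IsClique ↑s then (-1 : ℤ) ^ s.card else 0)
      = ∑ s ∈ univ.filter (fun s : Finset V => G.IsClique ↑s), (-1 : ℤ) ^ s.card := by
    rw [Finset.sum_filter]
  rw [hsum]
  have hfib := Finset.sum_fiberwise_of_maps_to (g := fun s : Finset V => s.card)
      (t := Finset.Icc 0 (Fintype.card V))
      (f := fun s : Finset V => (-1 : ℤ) ^ s.card)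
      (s := univ.filter (fun s : Finset V => G.IsClique ↑s))
      (fun s _ => by simp [Finset.mem_Icc, Finset.card_le_univ])
  rw [← hfib]
  have hinner : ∀ n ∈ Finset.Icc 0 (Fintype.card V),
      (∑ s ∈ (univ.filter (fun s : Finset V => G.IsClique ↑s)).filter
        (fun s => s.card = n), (-1 : ℤ) ^ s.card)
      = (-1 : ℤ) ^ n * cliqueCount G n := by
    intro n _
    have hset : (univ.filter (fun s : Finset V => G.IsClique ↑s)).filter (fun s => s.card = n)
        = univ.filter (fun s : Finset V => G.IsNClique n s) := by
      ext s
      simp [SimpleGraph.isNClique_iff, and_assoc]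
    rw [Finset.sum_congr hset (fun s hs => by
      rw [(Finset.mem_filter.mp hs).2.card_eq]), Finset.sum_const, hcount]
    ring
  rw [Finset.sum_congr rfl hinner]
  have hins : Finset.Icc 0 (Fintype.card V) = insert 0 (Finset.Icc 1 (Fintype.card V)) := by
    ext x
    simp [Finset.mem_Icc]
    omega
  rw [hins, Finset.sum_insert (by simp), cliqueCount_zero, eulerChar]
  have hterm : ∀ n ∈ Finset.Icc 1 (Fintype.card V),
      (-1 : ℤ) ^ (n + 1) * cliqueCount G n = -((-1 : ℤ) ^ n * cliqueCount G n) := by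
    intro n _
    rw [pow_succ]
    ring
  rw [Finset.sum_congr rfl hterm, Finset.sum_neg_distrib]
  ring

lemma isClique_zykovJoin (G : SimpleGraph V) (H : SimpleGraph W) (s : Finset (V ⊕ W)) :
    (zykovJoin G H).IsClique ↑s ↔ G.IsClique ↑s.toLeft ∧ H.IsClique ↑s.toRight := by
  constructor
  · intro hs
    constructor
    · intro a ha b hb hne
      exact hs (by simpa using ha) (by simpa using hb) (by simp [hne])
    · intro a ha b hb hne
      exact hs (by simpa using ha) (by simpa using hb) (by simp [hne])
  · rintro ⟨hG, hH⟩
    rintro (a | a) ha (b | b) hb hne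
    · exact hG (by simpa using ha) (by simpa using hb) (by simpa using hne)
    · trivial
    · trivial
    · exact hH (by simpa using ha) (by simpa using hb) (by simpa using hne)

/-- The quantity `i(G) = 1 - χ(G)` is multiplicative under the Zykov
join: `1 - χ(G + H) = (1 - χ(G))·(1 - χ(H))`. -/
theorem one_sub_eulerChar_zykovJoin [Fintype V] [Fintype W]
    (G : SimpleGraph V) (H : SimpleGraph W) :
    1 - eulerChar (zykovJoin G H) = (1 - eulerChar G) * (1 - eulerChar H) := by
  classical
  rw [one_sub_eulerChar G, one_sub_eulerChar H, one_sub_eulerChar (zykovJoin G H)]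
  rw [Finset.sum_mul_sum]
  rw [← Fintype.sum_prod_type (f := fun p : Finset V × Finset W =>
    (if G.IsClique ↑p.1 then (-1 : ℤ) ^ p.1.card else 0) *
    (if H.IsClique ↑p.2 then (-1 : ℤ) ^ p.2.card else 0))]
  refine (Fintype.sum_bijective (fun p : Finset V × Finset W => p.1.disjSum p.2)
    ⟨fun p q hpq => ?_, fun s => ⟨(s.toLeft, s.toRight), Finset.toLeft_disjSum_toRight⟩⟩
    _ _ fun p => ?_).symm
  · have h1 := congrArg Finset.toLeft hpq
    have h2 := congrArg Finset.toRight hpq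
    simp only [Finset.toLeft_disjSum, Finset.toRight_disjSum] at h1 h2
    exact Prod.ext h1 h2
  · simp only [isClique_zykovJoin, Finset.toLeft_disjSum, Finset.toRight_disjSum,
      Finset.card_disjSum, pow_add]
    by_cases h1 : G.IsClique ↑p.1 <;> by_cases h2 : H.IsClique ↑p.2 <;>
      simp [h1, h2]
end

section
/- The Euler characteristic is multiplicative for the strong product: for finite simple graphs G and H, χ(G ⊠ H) = χ(G) · χ(H), where G ⊠ H is the strong product of G and H. -/
variable {V W U : Type*}

/- ========= auxiliary lemmas for eulerChar_strongProd ========= -/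

namespace EulerAux
open Finset

section Comb
variable {V W : Type*} [DecidableEq V] [DecidableEq W]

/-- signed count of subsets of `A ×ˢ B` projecting onto both `A` and `B`. -/
def gsum (A : Finset V) (B : Finset W) : ℤ :=
  ∑ S ∈ (A ×ˢ B).powerset.filter
      (fun S => S.image Prod.fst = A ∧ S.image Prod.snd = B),
    (-1 : ℤ) ^ S.card

/-- closed-form value of `gsum`. -/
def vval (A : Finset V) (B : Finset W) : ℤ :=
  if A = ∅ then (if B = ∅ then 1 else 0)
  else (if B = ∅ then 0 else (-1) ^ (A.card + B.card + 1))

lemma gsum_empty_empty : gsum (∅ : Finset V) (∅ : Finset W) = 1 := by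
  have : (∅ ×ˢ ∅ : Finset (V × W)).powerset.filter
      (fun S => S.image Prod.fst = ∅ ∧ S.image Prod.snd = ∅) = {∅} := by
    ext S
    simp [Finset.subset_empty]
  rw [gsum, this]; simp

lemma gsum_empty_right {A : Finset V} (hA : A ≠ ∅) : gsum A (∅ : Finset W) = 0 := by
  apply Finset.sum_eq_zero
  intro S hS
  simp only [mem_filter, mem_powerset] at hS
  exfalso
  obtain ⟨hsub, h1, _⟩ := hS
  rw [Finset.product_empty, Finset.subset_empty] at hsub
  subst hsub; simp at h1; exact hA h1.symm

lemma gsum_empty_left {B : Finset W} (hB : B ≠ ∅) : gsum (∅ : Finset V) B = 0 := by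
  apply Finset.sum_eq_zero
  intro S hS
  simp only [mem_filter, mem_powerset] at hS
  exfalso
  obtain ⟨hsub, _, h2⟩ := hS
  rw [Finset.empty_product, Finset.subset_empty] at hsub
  subst hsub; simp at h2; exact hB h2.symm

lemma gsum_total (A : Finset V) (B : Finset W) :
    ∑ p ∈ A.powerset ×ˢ B.powerset, gsum p.1 p.2
      = if A = ∅ ∨ B = ∅ then 1 else 0 := by
  have hmaps : ∀ S ∈ (A ×ˢ B).powerset,
      (S.image Prod.fst, S.image Prod.snd) ∈ A.powerset ×ˢ B.powerset := by
    intro S hS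
    rw [mem_powerset] at hS
    rw [mem_product, mem_powerset, mem_powerset]
    constructor
    · intro x hx
      obtain ⟨p, hp, rfl⟩ := Finset.mem_image.1 hx
      exact (Finset.mem_product.1 (hS hp)).1
    · intro x hx
      obtain ⟨p, hp, rfl⟩ := Finset.mem_image.1 hx
      exact (Finset.mem_product.1 (hS hp)).2
  have key := Finset.sum_fiberwise_of_maps_to hmaps (fun S => (-1 : ℤ) ^ S.card)
  have hfib : ∀ p ∈ A.powerset ×ˢ B.powerset,
      (∑ S ∈ (A ×ˢ B).powerset.filter
        (fun S => (S.image Prod.fst, S.image Prod.snd) = p), (-1 : ℤ) ^ S.card)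
      = gsum p.1 p.2 := by
    rintro ⟨A', B'⟩ hp
    rw [mem_product, mem_powerset, mem_powerset] at hp
    rw [gsum]
    congr 1
    ext S
    simp only [mem_filter, mem_powerset, Prod.mk.injEq]
    constructor
    · rintro ⟨_, h1, h2⟩
      refine ⟨?_, h1, h2⟩
      intro x hx
      rw [Finset.mem_product]
      constructor
      · rw [← h1]; exact Finset.mem_image.2 ⟨x, hx, rfl⟩
      · rw [← h2]; exact Finset.mem_image.2 ⟨x, hx, rfl⟩
    · rintro ⟨hsub, h1, h2⟩
      refine ⟨hsub.trans (Finset.product_subset_product hp.1 hp.2), h1, h2⟩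
  rw [Finset.sum_congr rfl hfib] at key
  rw [key, Finset.sum_powerset_neg_one_pow_card]
  congr 1
  simp [Finset.product_eq_empty]

lemma vsum_inner {B : Finset W} (hB : B.Nonempty) (A' : Finset V) :
    ∑ B' ∈ B.powerset, vval A' B' = (-1 : ℤ) ^ A'.card := by
  by_cases hA' : A' = ∅
  · subst hA'
    simp only [vval, if_true, eq_self_iff_true, card_empty, pow_zero]
    rw [Finset.sum_ite_eq' B.powerset ∅ (fun _ => (1:ℤ))]
    simp
  · simp only [vval, if_neg hA']
    have hstep : ∀ B' ∈ B.powerset,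
        (if B' = ∅ then (0:ℤ) else (-1) ^ (A'.card + B'.card + 1))
          = (-1:ℤ) ^ (A'.card + B'.card + 1)
            - (if B' = ∅ then (-1:ℤ) ^ (A'.card + 1) else 0) := by
      intro B' _
      by_cases h : B' = ∅
      · subst h; simp
      · simp [h]
    rw [Finset.sum_congr rfl hstep, Finset.sum_sub_distrib]
    rw [Finset.sum_ite_eq' B.powerset ∅ (fun _ => (-1:ℤ) ^ (A'.card + 1))]
    have h1 : ∑ B' ∈ B.powerset, (-1:ℤ) ^ (A'.card + B'.card + 1)
        = (∑ B' ∈ B.powerset, (-1:ℤ) ^ B'.card) * (-1:ℤ) ^ (A'.card + 1) := by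
      rw [Finset.sum_mul]
      apply Finset.sum_congr rfl
      intro B' _
      rw [← pow_add]
      ring_nf
    rw [h1, Finset.sum_powerset_neg_one_pow_card_of_nonempty hB]
    simp [pow_succ]

lemma vsum_total {A : Finset V} {B : Finset W} (hA : A.Nonempty) (hB : B.Nonempty) :
    ∑ p ∈ A.powerset ×ˢ B.powerset, vval p.1 p.2 = 0 := by
  rw [Finset.sum_product]
  have : ∀ A' ∈ A.powerset, ∑ B' ∈ B.powerset, vval A' B' = (-1:ℤ) ^ A'.card :=
    fun A' _ => vsum_inner hB A'
  rw [Finset.sum_congr rfl this, Finset.sum_powerset_neg_one_pow_card_of_nonempty hA]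

lemma gsum_eq_vval : ∀ (n : ℕ) (A : Finset V) (B : Finset W),
    A.card + B.card ≤ n → gsum A B = vval A B := by
  intro n
  induction n with
  | zero =>
    intro A B h
    have hA : A = ∅ := card_eq_zero.1 (Nat.le_zero.1 (le_trans (Nat.le_add_right _ _) h))
    have hB : B = ∅ := card_eq_zero.1 (Nat.le_zero.1 (le_trans (Nat.le_add_left _ _) h))
    subst hA; subst hB
    rw [gsum_empty_empty, vval]; simp
  | succ n ih =>
    intro A B hle
    by_cases hA : A = ∅
    · subst hA
      by_cases hB : B = ∅
      · subst hB; rw [gsum_empty_empty, vval]; simp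
      · rw [gsum_empty_left hB, vval]; simp [hB]
    by_cases hB : B = ∅
    · subst hB; rw [gsum_empty_right hA, vval]; simp [hA]
    have hAne : A.Nonempty := nonempty_iff_ne_empty.2 hA
    have hBne : B.Nonempty := nonempty_iff_ne_empty.2 hB
    have hmem : (A, B) ∈ A.powerset ×ˢ B.powerset := by
      rw [mem_product, mem_powerset, mem_powerset]; exact ⟨subset_rfl, subset_rfl⟩
    have herase : ∀ p ∈ (A.powerset ×ˢ B.powerset).erase (A, B),
        gsum p.1 p.2 = vval p.1 p.2 := by
      rintro ⟨A', B'⟩ hp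
      have hne := Finset.ne_of_mem_erase hp
      have hp' := Finset.mem_of_mem_erase hp
      rw [mem_product, mem_powerset, mem_powerset] at hp'
      dsimp only at hp' ⊢
      apply ih
      have hlt : A'.card + B'.card < A.card + B.card := by
        rcases eq_or_ne A' A with rfl | hA'
        · have hB' : B' ⊂ B := by
            refine Finset.ssubset_iff_subset_ne.2 ⟨hp'.2, ?_⟩
            intro h; exact hne (by rw [h])
          have := Finset.card_lt_card hB'
          omega
        · have hA'' : A' ⊂ A := Finset.ssubset_iff_subset_ne.2 ⟨hp'.1, hA'⟩
          have h1 := Finset.card_lt_card hA''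
          have h2 := Finset.card_le_card hp'.2
          omega
      omega
    have htot := gsum_total A B
    rw [if_neg (by push_neg; exact ⟨hAne, hBne⟩)] at htot
    have hvtot := vsum_total hAne hBne
    rw [← Finset.add_sum_erase _ _ hmem] at htot hvtot
    rw [Finset.sum_congr rfl herase] at htot
    have : gsum A B = vval A B := by linarith
    exact this

lemma gsum_of_nonempty {A : Finset V} {B : Finset W} (hA : A.Nonempty) (hB : B.Nonempty) :
    gsum A B = (-1 : ℤ) ^ (A.card + B.card + 1) := by
  rw [gsum_eq_vval (A.card + B.card) A B le_rfl, vval,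
    if_neg (nonempty_iff_ne_empty.1 hA), if_neg (nonempty_iff_ne_empty.1 hB)]

end Comb

section Graph
variable {V W : Type*}

lemma strongProd_isClique_iff [DecidableEq V] [DecidableEq W]
    (G : SimpleGraph V) (H : SimpleGraph W) (S : Finset (V × W)) :
    (strongProd G H).IsClique ↑S ↔
      G.IsClique ↑(S.image Prod.fst) ∧ H.IsClique ↑(S.image Prod.snd) := by
  constructor
  · intro hS
    constructor
    · intro a ha b hb hab
      simp only [coe_image, Set.mem_image, mem_coe] at ha hb
      obtain ⟨p, hp, rfl⟩ := ha
      obtain ⟨q, hq, rfl⟩ := hb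
      have hpq : p ≠ q := fun h => hab (by rw [h])
      rcases hS hp hq hpq with ⟨h1, _⟩ | ⟨_, h2⟩ | ⟨h1, _⟩
      · exact absurd h1 hab
      · exact h2
      · exact h1
    · intro a ha b hb hab
      simp only [coe_image, Set.mem_image, mem_coe] at ha hb
      obtain ⟨p, hp, rfl⟩ := ha
      obtain ⟨q, hq, rfl⟩ := hb
      have hpq : p ≠ q := fun h => hab (by rw [h])
      rcases hS hp hq hpq with ⟨_, h2⟩ | ⟨h1, _⟩ | ⟨_, h2⟩
      · exact h2
      · exact absurd h1 hab
      · exact h2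
  · rintro ⟨hG, hH⟩ p hp q hq hpq
    simp only [mem_coe] at hp hq
    have h1 : p.1 ∈ (↑(S.image Prod.fst) : Set V) := by simp; exact ⟨p.2, hp⟩
    have q1 : q.1 ∈ (↑(S.image Prod.fst) : Set V) := by simp; exact ⟨q.2, hq⟩
    have h2 : p.2 ∈ (↑(S.image Prod.snd) : Set W) := by simp; exact ⟨p.1, hp⟩
    have q2 : q.2 ∈ (↑(S.image Prod.snd) : Set W) := by simp; exact ⟨q.1, hq⟩
    by_cases e1 : p.1 = q.1
    · by_cases e2 : p.2 = q.2
      · exact absurd (Prod.ext e1 e2) hpq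
      · exact Or.inl ⟨e1, hH h2 q2 e2⟩
    · by_cases e2 : p.2 = q.2
      · exact Or.inr (Or.inl ⟨e2, hG h1 q1 e1⟩)
      · exact Or.inr (Or.inr ⟨hG h1 q1 e1, hH h2 q2 e2⟩)

noncomputable def Kc (G : SimpleGraph V) [Fintype V] : Finset (Finset V) :=
  @Finset.filter _ (fun s => s.Nonempty ∧ G.IsClique ↑s) (Classical.decPred _) Finset.univ

lemma mem_Kc {G : SimpleGraph V} [Fintype V] {s : Finset V} :
    s ∈ Kc G ↔ s.Nonempty ∧ G.IsClique ↑s := by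
  rw [Kc]; simp [Finset.mem_filter]

lemma eulerChar_eq_sum (G : SimpleGraph V) [Fintype V] :
    eulerChar G = ∑ s ∈ Kc G, (-1 : ℤ) ^ (s.card + 1) := by
  classical
  have hmaps : ∀ s ∈ Kc G, s.card ∈ Finset.Icc 1 (Fintype.card V) := by
    intro s hs
    rw [mem_Kc] at hs
    rw [mem_Icc]
    exact ⟨hs.1.card_pos, by simpa using Finset.card_le_univ s⟩
  rw [eulerChar, ← Finset.sum_fiberwise_of_maps_to hmaps (fun s => (-1 : ℤ) ^ (s.card + 1))]
  apply Finset.sum_congr rfl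
  intro n hn
  rw [mem_Icc] at hn
  have hfib : (Kc G).filter (fun s => s.card = n)
      = Finset.univ.filter (fun s : Finset V => G.IsNClique n s) := by
    ext s
    simp only [Finset.mem_filter, mem_Kc, Finset.mem_univ, true_and,
      SimpleGraph.isNClique_iff]
    constructor
    · rintro ⟨⟨_, hc⟩, hcard⟩; exact ⟨hc, hcard⟩
    · rintro ⟨hc, hcard⟩
      exact ⟨⟨Finset.card_pos.1 (by omega), hc⟩, hcard⟩
  rw [hfib]
  have hconst : ∀ s ∈ Finset.univ.filter (fun s : Finset V => G.IsNClique n s),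
      (-1 : ℤ) ^ (s.card + 1) = (-1 : ℤ) ^ (n + 1) := by
    intro s hs
    rw [Finset.mem_filter] at hs
    rw [hs.2.2]
  rw [Finset.sum_congr rfl hconst, Finset.sum_const, nsmul_eq_mul]
  have hcount : (cliqueCount G n : ℤ)
      = ((Finset.univ.filter (fun s : Finset V => G.IsNClique n s)).card : ℤ) := by
    have : {s : Finset V | G.IsNClique n s}
        = ↑(Finset.univ.filter (fun s : Finset V => G.IsNClique n s)) := by
      ext s; simp
    rw [cliqueCount, this, Set.ncard_coe_finset]
  rw [hcount]; ring

end Graph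
end EulerAux


/-- The Euler characteristic is multiplicative for the strong
product: `χ(G ⊠ H) = χ(G)·χ(H)`. -/
theorem eulerChar_strongProd [Fintype V] [Fintype W]
    (G : SimpleGraph V) (H : SimpleGraph W) :
    eulerChar (strongProd G H) = eulerChar G * eulerChar H := by
  classical
  open Finset EulerAux in
  rw [eulerChar_eq_sum (strongProd G H), eulerChar_eq_sum G, eulerChar_eq_sum H]
  have hmaps : ∀ S ∈ Kc (strongProd G H),
      (S.image Prod.fst, S.image Prod.snd) ∈ Kc G ×ˢ Kc H := by
    intro S hS
    rw [mem_Kc] at hS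
    rw [Finset.mem_product, mem_Kc, mem_Kc]
    have hcl := (strongProd_isClique_iff G H S).1 hS.2
    exact ⟨⟨hS.1.image _, hcl.1⟩, ⟨hS.1.image _, hcl.2⟩⟩
  rw [← Finset.sum_fiberwise_of_maps_to hmaps (fun S => (-1 : ℤ) ^ (S.card + 1))]
  have hinner : ∀ p ∈ Kc G ×ˢ Kc H,
      (∑ S ∈ (Kc (strongProd G H)).filter
        (fun S => (S.image Prod.fst, S.image Prod.snd) = p), (-1 : ℤ) ^ (S.card + 1))
      = (-1 : ℤ) ^ (p.1.card + p.2.card) := by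
    rintro ⟨A, B⟩ hp
    rw [Finset.mem_product, mem_Kc, mem_Kc] at hp
    dsimp only at hp ⊢
    have hfib : (Kc (strongProd G H)).filter
        (fun S => (S.image Prod.fst, S.image Prod.snd) = (A, B))
        = (A ×ˢ B).powerset.filter
            (fun S => S.image Prod.fst = A ∧ S.image Prod.snd = B) := by
      ext S
      simp only [Finset.mem_filter, mem_Kc, Finset.mem_powerset, Prod.mk.injEq]
      constructor
      · rintro ⟨⟨hne, hcl⟩, h1, h2⟩
        refine ⟨?_, h1, h2⟩
        intro x hx
        rw [Finset.mem_product]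
        constructor
        · rw [← h1]; exact Finset.mem_image.2 ⟨x, hx, rfl⟩
        · rw [← h2]; exact Finset.mem_image.2 ⟨x, hx, rfl⟩
      · rintro ⟨hsub, h1, h2⟩
        have hne : S.Nonempty := by
          rw [← Finset.image_nonempty (f := Prod.fst), h1]
          exact hp.1.1
        have hcl : (strongProd G H).IsClique ↑S := by
          rw [strongProd_isClique_iff G H S, h1, h2]
          exact ⟨hp.1.2, hp.2.2⟩
        exact ⟨⟨hne, hcl⟩, h1, h2⟩
    rw [hfib]
    have hsplit : ∑ S ∈ (A ×ˢ B).powerset.filter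
          (fun S => S.image Prod.fst = A ∧ S.image Prod.snd = B),
        (-1 : ℤ) ^ (S.card + 1)
        = gsum A B * (-1 : ℤ) := by
      rw [gsum, Finset.sum_mul]
      apply Finset.sum_congr rfl
      intro S _
      rw [pow_succ]
    rw [hsplit, gsum_of_nonempty hp.1.1 hp.2.1, pow_succ]
    ring
  rw [Finset.sum_congr rfl hinner, Finset.sum_product, Finset.sum_mul_sum]
  apply Finset.sum_congr rfl
  intro A _
  apply Finset.sum_congr rfl
  intro B _
  show (-1:ℤ) ^ (A.card + B.card) = (-1) ^ (A.card + 1) * (-1) ^ (B.card + 1)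
  rw [← pow_add, show A.card + 1 + (B.card + 1) = A.card + B.card + 2 by omega]
  rw [pow_add (-1:ℤ) (A.card + B.card) 2, neg_one_sq, mul_one]
end

section
/- Cancellation in the additive Zykov monoid: for finite simple graphs G, H, K, if the Zykov join G + K is isomorphic to the Zykov join H + K, then G is isomorphic to H. -/
variable {V W U : Type*}

namespace ZykovCancelAux

/-- One step of the chase: elements of `W` stay put, elements of `U` are fed back
through `e`. -/
def jstep (e : V ⊕ U ≃ W ⊕ U) : W ⊕ U → W ⊕ U
  | .inl w => .inl w
  | .inr u => e (.inr u)

/-- The chase chain starting from `x`. -/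
def jchain (e : V ⊕ U ≃ W ⊕ U) (x : V ⊕ U) (n : ℕ) : W ⊕ U :=
  (jstep e)^[n] (e x)

lemma jchain_zero (e : V ⊕ U ≃ W ⊕ U) (x : V ⊕ U) : jchain e x 0 = e x := rfl

lemma jchain_succ (e : V ⊕ U ≃ W ⊕ U) (x : V ⊕ U) (n : ℕ) :
    jchain e x (n + 1) = jstep e (jchain e x n) :=
  Function.iterate_succ_apply' _ _ _

lemma jchain_succ' (e : V ⊕ U ≃ W ⊕ U) (x : V ⊕ U) (n : ℕ) :
    jchain e x (n + 1) = (jstep e)^[n] (jstep e (e x)) :=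
  Function.iterate_succ_apply _ _ _

lemma jchain_stable (e : V ⊕ U ≃ W ⊕ U) (x : V ⊕ U) {m n : ℕ} {w : W}
    (h : jchain e x m = .inl w) (hmn : m ≤ n) : jchain e x n = .inl w := by
  obtain ⟨k, rfl⟩ := Nat.exists_eq_add_of_le hmn
  induction k with
  | zero => exact h
  | succ k ih => rw [← Nat.add_assoc, jchain_succ, ih (Nat.le_add_right m k)]; rfl

lemma jchain_ne (e : V ⊕ U ≃ W ⊕ U) (a : V) :
    ∀ i j, i < j → (∀ t ≤ j, ∃ u : U, jchain e (.inl a) t = .inr u) →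
    jchain e (.inl a) i ≠ jchain e (.inl a) j := by
  intro i
  induction i with
  | zero =>
    intro j hij hall heq
    obtain ⟨j, rfl⟩ := Nat.exists_eq_add_of_lt hij
    obtain ⟨u, hu⟩ := hall j (by omega)
    rw [jchain_zero, Nat.zero_add, jchain_succ, hu] at heq
    exact absurd (e.injective heq) (by simp)
  | succ i ih =>
    intro j hij hall heq
    obtain ⟨k, rfl⟩ := Nat.exists_eq_add_of_lt hij
    obtain ⟨ui, hui⟩ := hall i (by omega)
    obtain ⟨uj, huj⟩ := hall (i + 1 + k) (by omega)
    rw [jchain_succ, hui, show i + 1 + k + 1 = (i + 1 + k) + 1 from rfl,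
      jchain_succ, huj] at heq
    have : (Sum.inr ui : V ⊕ U) = .inr uj := e.injective heq
    have hcc : jchain e (.inl a) i = jchain e (.inl a) (i + 1 + k) := by
      rw [hui, huj]; exact congrArg Sum.inr (Sum.inr.inj this)
    exact ih (i + 1 + k) (by omega) (fun t ht => hall t (by omega)) hcc

lemma exists_jmap [Fintype U] (e : V ⊕ U ≃ W ⊕ U) (a : V) :
    ∃ w : W, jchain e (.inl a) (Fintype.card U) = .inl w := by
  by_contra hcon
  push_neg at hcon
  set N := Fintype.card U with hN
  have hall : ∀ t ≤ N, ∃ u : U, jchain e (.inl a) t = .inr u := by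
    intro t ht
    rcases hx : jchain e (.inl a) t with w | u
    · exact absurd (jchain_stable e _ hx ht) (hcon w)
    · exact ⟨u, rfl⟩
  have hspec : ∀ i : Fin (N + 1),
      jchain e (.inl a) i = .inr ((hall i (by omega)).choose) :=
    fun i => (hall i (by omega)).choose_spec
  have hinj : Function.Injective (fun i : Fin (N + 1) => (hall i (by omega)).choose) := by
    intro i j hij
    by_contra hne
    have hij' : (hall i (by omega)).choose = (hall j (by omega)).choose := hij
    have h1 := hspec i
    have h2 := hspec j
    rw [hij'] at h1
    have hcc : jchain e (.inl a) i = jchain e (.inl a) j := h1.trans h2.symm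
    rcases Ne.lt_or_gt (fun h : (i : ℕ) = j => hne (Fin.ext h)) with hlt | hlt
    · exact jchain_ne e a i j hlt (fun t ht => hall t (le_trans ht (by omega))) hcc
    · exact jchain_ne e a j i hlt (fun t ht => hall t (le_trans ht (by omega))) hcc.symm
  have := Fintype.card_le_of_injective _ hinj
  simp [hN] at this

/-- The cancellation map `V → W`. -/
noncomputable def jmap [Fintype U] (e : V ⊕ U ≃ W ⊕ U) (a : V) : W :=
  (exists_jmap e a).choose

lemma jmap_spec [Fintype U] (e : V ⊕ U ≃ W ⊕ U) (a : V) :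
    jchain e (.inl a) (Fintype.card U) = .inl (jmap e a) :=
  (exists_jmap e a).choose_spec

lemma jchain_rev (e : V ⊕ U ≃ W ⊕ U) :
    ∀ (n : ℕ) (x : V ⊕ U) (w : W), jchain e x n = .inl w →
    ∃ m ≤ n, jchain e.symm (.inl w) m = x := by
  intro n
  induction n with
  | zero =>
    intro x w h
    exact ⟨0, le_refl _, by rw [jchain_zero, ← h, jchain_zero, e.symm_apply_apply]⟩
  | succ n ih =>
    intro x w h
    rcases hx : e x with w' | u
    · have h0 : jchain e x 0 = .inl w' := by rw [jchain_zero, hx]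
      have := jchain_stable e x h0 (Nat.zero_le (n + 1))
      rw [h] at this
      obtain rfl : w = w' := Sum.inl.inj this
      exact ⟨0, Nat.zero_le _, by
        rw [jchain_zero]; exact (e.symm_apply_eq.mpr hx.symm)⟩
    · have hc : jchain e (.inr u) n = .inl w := by
        rw [← h, jchain_succ' e x n, hx]; rfl
      obtain ⟨m, hm, hrev⟩ := ih (.inr u) w hc
      refine ⟨m + 1, by omega, ?_⟩
      rw [jchain_succ, hrev]
      show e.symm (.inr u) = x
      rw [← hx, e.symm_apply_apply]

lemma jmap_leftInv [Fintype U] (e : V ⊕ U ≃ W ⊕ U) (a : V) :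
    jmap e.symm (jmap e a) = a := by
  obtain ⟨m, hm, hrev⟩ := jchain_rev e (Fintype.card U) (.inl a) (jmap e a)
    (jmap_spec e a)
  have := jchain_stable e.symm _ hrev hm
  rw [jmap_spec e.symm (jmap e a)] at this
  exact Sum.inl.inj this

variable {G : SimpleGraph V} {H : SimpleGraph W} {K : SimpleGraph U}

lemma jstep_R (f : zykovJoin G K ≃g zykovJoin H K) {x y : W ⊕ U}
    (hne : x ≠ y) (hadj : ¬ (zykovJoin H K).Adj x y) :
    jstep f.toEquiv x ≠ jstep f.toEquiv y ∧
      ¬ (zykovJoin H K).Adj (jstep f.toEquiv x) (jstep f.toEquiv y) := by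
  cases x with
  | inl w =>
    cases y with
    | inl w' => exact ⟨hne, hadj⟩
    | inr u => exact absurd trivial hadj
  | inr u =>
    cases y with
    | inl w' => exact absurd trivial hadj
    | inr u' =>
      have hu : u ≠ u' := fun h => hne (by rw [h])
      have hK : ¬ K.Adj u u' := hadj
      constructor
      · intro h
        exact hu (Sum.inr.inj (f.toEquiv.injective h))
      · intro h
        have : (zykovJoin G K).Adj (.inr u) (.inr u') := f.map_adj_iff.mp h
        exact hK this

lemma jchain_R (f : zykovJoin G K ≃g zykovJoin H K) {a a' : V}
    (hne : a ≠ a') (hadj : ¬ G.Adj a a') (n : ℕ) :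
    jchain f.toEquiv (.inl a) n ≠ jchain f.toEquiv (.inl a') n ∧
      ¬ (zykovJoin H K).Adj (jchain f.toEquiv (.inl a) n)
        (jchain f.toEquiv (.inl a') n) := by
  induction n with
  | zero =>
    rw [jchain_zero, jchain_zero]
    constructor
    · intro h
      exact hne (Sum.inl.inj (f.toEquiv.injective h))
    · intro h
      exact hadj (f.map_adj_iff.mp h)
  | succ n ih =>
    rw [jchain_succ, jchain_succ]
    exact jstep_R f ih.1 ih.2

lemma jmap_nadj [Fintype U] (f : zykovJoin G K ≃g zykovJoin H K) {a a' : V}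
    (hne : a ≠ a') (hadj : ¬ G.Adj a a') :
    ¬ H.Adj (jmap f.toEquiv a) (jmap f.toEquiv a') := by
  have h := (jchain_R f hne hadj (Fintype.card U)).2
  rw [jmap_spec, jmap_spec] at h
  exact h

end ZykovCancelAux

/-- Cancellation in the additive Zykov monoid: if `G + K ≅ H + K`
then `G ≅ H`. -/
theorem zykovJoin_cancel [Fintype V] [Fintype W] [Fintype U]
    (G : SimpleGraph V) (H : SimpleGraph W) (K : SimpleGraph U)
    (h : Nonempty (zykovJoin G K ≃g zykovJoin H K)) : Nonempty (G ≃g H) := by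
  classical
  obtain ⟨f⟩ := h
  open ZykovCancelAux in
  have hsymm : f.symm.toEquiv = f.toEquiv.symm := rfl
  let φ : V ≃ W :=
    { toFun := ZykovCancelAux.jmap f.toEquiv
      invFun := ZykovCancelAux.jmap f.toEquiv.symm
      left_inv := fun a => ZykovCancelAux.jmap_leftInv f.toEquiv a
      right_inv := fun w => by
        have := ZykovCancelAux.jmap_leftInv f.toEquiv.symm w
        rwa [Equiv.symm_symm] at this }
  refine ⟨⟨φ, ?_⟩⟩
  intro a a'
  show H.Adj (ZykovCancelAux.jmap f.toEquiv a) (ZykovCancelAux.jmap f.toEquiv a') ↔ G.Adj a a'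
  constructor
  · intro hH
    by_contra hG
    rcases eq_or_ne a a' with rfl | hne
    · exact (zykovJoin H K).irrefl (by exact hH :
        (zykovJoin H K).Adj (.inl (ZykovCancelAux.jmap f.toEquiv a))
          (.inl (ZykovCancelAux.jmap f.toEquiv a)))
    · exact ZykovCancelAux.jmap_nadj f hne hG hH
  · intro hG
    by_contra hH
    have hne : ZykovCancelAux.jmap f.toEquiv a ≠ ZykovCancelAux.jmap f.toEquiv a' :=
      φ.injective.ne hG.ne
    have h2 : ¬ G.Adj (ZykovCancelAux.jmap f.toEquiv.symm (ZykovCancelAux.jmap f.toEquiv a))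
        (ZykovCancelAux.jmap f.toEquiv.symm (ZykovCancelAux.jmap f.toEquiv a')) :=
      ZykovCancelAux.jmap_nadj f.symm (G := H) (H := G) hne hH
    rw [ZykovCancelAux.jmap_leftInv, ZykovCancelAux.jmap_leftInv] at h2
    exact h2 hG
end
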